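/- Let z ∈ (0,1), let P be a set of n points in ℝ^d, let w : P → [0,∞) be a weight function, and let M be an invertible d×d real matrix such that for every x ∈ ℝ^d, ‖Mx‖₂^z ≤ ∑_{q∈P} w(q)·|qᵀx|^z and ∑_{q∈P} w(q)^{1/z}·|qᵀx| ≤ √d·‖Mx‖₂. Then the total sensitivity satisfies ∑_{p∈P} sup_{x : ∑_{q∈P} w(q)|qᵀx|^z > 0} w(p)·|pᵀx|^z / ∑_{q∈P} w(q)·|qᵀx|^z ≤ n^{1−z}·d^{z/2 + 1}. -/

import Mathlib

open Matrix

/-- The Euclidean (`ℓ₂`) norm of a vector in `ℝ^d`. -/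
noncomputable def l2 {d : ℕ} (x : Fin d → ℝ) : ℝ := Real.sqrt (∑ i, x i ^ 2)

lemma l2_nonneg {d : ℕ} (x : Fin d → ℝ) : 0 ≤ l2 x := Real.sqrt_nonneg _

lemma abs_dot_le_l2 {d : ℕ} (u y : Fin d → ℝ) : |∑ i, u i * y i| ≤ l2 u * l2 y := by
  rw [← Real.sqrt_sq_eq_abs, l2, l2, ← Real.sqrt_mul (by positivity)]
  exact Real.sqrt_le_sqrt (Finset.sum_mul_sq_le_sq_mul_sq _ _ _)

lemma l2_le_sum_abs {d : ℕ} (x : Fin d → ℝ) : l2 x ≤ ∑ i, |x i| := by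
  rw [l2]
  calc Real.sqrt (∑ i, x i ^ 2) ≤ Real.sqrt ((∑ i, |x i|) ^ 2) := by
        apply Real.sqrt_le_sqrt
        simpa [sq_abs] using
          Finset.sum_sq_le_sq_sum_of_nonneg (f := fun i => |x i|) (fun i _ => abs_nonneg _)
    _ = ∑ i, |x i| := Real.sqrt_sq (by positivity)

lemma l2_single {d : ℕ} (i : Fin d) : l2 (Pi.single i (1:ℝ)) = 1 := by
  simp [l2, Pi.single_apply, Finset.sum_ite_eq']

/-- Total sensitivity bound for `ℓ_z`-regression, `z ∈ (0,1)`: if `M` is an invertible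
matrix with `‖Mx‖₂^z ≤ ∑_{q∈P} w(q)|qᵀx|^z` and `∑_{q∈P} w(q)^(1/z)|qᵀx| ≤ √d·‖Mx‖₂`
for every `x`, then the sum of the weighted sensitivities is at most `n^(1−z)·d^(z/2+1)`. -/
theorem lz_total_sensitivity_small_z {d n : ℕ} (z : ℝ) (hz : z ∈ Set.Ioo (0 : ℝ) 1)
    (P : Finset (Fin d → ℝ)) (hcard : P.card = n)
    (w : (Fin d → ℝ) → ℝ) (hw : ∀ p ∈ P, 0 ≤ w p)
    (M : Matrix (Fin d) (Fin d) ℝ) (hM : IsUnit M)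
    (hMlow : ∀ x : Fin d → ℝ, l2 (M.mulVec x) ^ z ≤ ∑ q ∈ P, w q * |∑ i, q i * x i| ^ z)
    (hMup : ∀ x : Fin d → ℝ,
      ∑ q ∈ P, w q ^ (1 / z) * |∑ i, q i * x i| ≤ Real.sqrt d * l2 (M.mulVec x)) :
    ∑ p ∈ P,
      (⨆ x : {x : Fin d → ℝ // 0 < ∑ q ∈ P, w q * |∑ i, q i * x i| ^ z},
        w p * |∑ i, p i * (x : Fin d → ℝ) i| ^ z /
          ∑ q ∈ P, w q * |∑ i, q i * (x : Fin d → ℝ) i| ^ z) ≤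
    (n : ℝ) ^ (1 - z) * (d : ℝ) ^ (z / 2 + 1) := by
  obtain ⟨hz0, hz1⟩ := hz
  have hdet : IsUnit M.det := (Matrix.isUnit_iff_isUnit_det M).mp hM
  set N := M⁻¹ with hNdef
  have hNM : ∀ x : Fin d → ℝ, N.mulVec (M.mulVec x) = x := by
    intro x
    rw [Matrix.mulVec_mulVec, Matrix.nonsing_inv_mul M hdet, Matrix.one_mulVec]
  have hMNs : ∀ i : Fin d, M.mulVec (N.mulVec (Pi.single i 1)) = Pi.single i 1 := by
    intro i
    rw [Matrix.mulVec_mulVec, Matrix.mul_nonsing_inv M hdet, Matrix.one_mulVec]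
  set b : (Fin d → ℝ) → (Fin d → ℝ) := fun p i => w p ^ (1/z) * ∑ j, N j i * p j with hbdef
  set a : (Fin d → ℝ) → ℝ := fun p => l2 (b p) with hadef
  have ha0 : ∀ p, 0 ≤ a p := fun p => l2_nonneg _
  -- key pointwise bound
  have hdot : ∀ p : Fin d → ℝ, 0 ≤ w p → ∀ x : Fin d → ℝ,
      w p ^ (1/z) * |∑ i, p i * x i| ≤ a p * l2 (M.mulVec x) := by
    intro p hwp x
    have key0 : ∀ y : Fin d → ℝ,
        ∑ i, b p i * y i = w p ^ (1/z) * ∑ j, p j * (N.mulVec y) j := by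
      intro y
      simp only [hbdef, Matrix.mulVec, dotProduct, Finset.sum_mul, Finset.mul_sum]
      rw [Finset.sum_comm]
      exact Finset.sum_congr rfl fun j _ => Finset.sum_congr rfl fun i _ => by ring
    have key : ∑ i, b p i * M.mulVec x i = w p ^ (1/z) * ∑ i, p i * x i := by
      rw [key0 (M.mulVec x), hNM x]
    calc w p ^ (1/z) * |∑ i, p i * x i| = |∑ i, b p i * M.mulVec x i| := by
          rw [key, abs_mul, abs_of_nonneg (Real.rpow_nonneg hwp _)]
      _ ≤ a p * l2 (M.mulVec x) := abs_dot_le_l2 _ _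
  -- each sensitivity is at most (a p)^z
  have hsens : ∀ p ∈ P,
      (⨆ x : {x : Fin d → ℝ // 0 < ∑ q ∈ P, w q * |∑ i, q i * x i| ^ z},
        w p * |∑ i, p i * (x : Fin d → ℝ) i| ^ z /
          ∑ q ∈ P, w q * |∑ i, q i * (x : Fin d → ℝ) i| ^ z) ≤ a p ^ z := by
    intro p hp
    rcases isEmpty_or_nonempty
        {x : Fin d → ℝ // 0 < ∑ q ∈ P, w q * |∑ i, q i * x i| ^ z} with he | hne
    · rw [Real.iSup_of_isEmpty]
      exact Real.rpow_nonneg (ha0 p) _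
    · apply ciSup_le
      rintro ⟨x, hx⟩
      rw [div_le_iff₀ hx]
      have hwz : (w p ^ (1/z)) ^ z = w p := by
        rw [← Real.rpow_mul (hw p hp), one_div_mul_cancel (ne_of_gt hz0), Real.rpow_one]
      calc w p * |∑ i, p i * x i| ^ z = (w p ^ (1/z) * |∑ i, p i * x i|) ^ z := by
            rw [Real.mul_rpow (Real.rpow_nonneg (hw p hp) _) (abs_nonneg _), hwz]
        _ ≤ (a p * l2 (M.mulVec x)) ^ z :=
            Real.rpow_le_rpow (mul_nonneg (Real.rpow_nonneg (hw p hp) _) (abs_nonneg _))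
              (hdot p (hw p hp) x) hz0.le
        _ = a p ^ z * l2 (M.mulVec x) ^ z := Real.mul_rpow (ha0 p) (l2_nonneg _)
        _ ≤ a p ^ z * ∑ q ∈ P, w q * |∑ i, q i * x i| ^ z :=
            mul_le_mul_of_nonneg_left (hMlow x) (Real.rpow_nonneg (ha0 p) _)
  refine le_trans (Finset.sum_le_sum hsens) ?_
  -- bound on the sum of the a p
  have hsumA : ∑ p ∈ P, a p ≤ (d : ℝ) * Real.sqrt d := by
    calc ∑ p ∈ P, a p ≤ ∑ p ∈ P, ∑ i, |b p i| := Finset.sum_le_sum fun p _ => l2_le_sum_abs _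
      _ = ∑ i : Fin d, ∑ p ∈ P, |b p i| := Finset.sum_comm
      _ ≤ ∑ _i : Fin d, Real.sqrt d := by
          apply Finset.sum_le_sum; intro i _
          have hxi : N.mulVec (Pi.single i (1:ℝ)) = fun j => N j i := by
            simp [Matrix.mulVec_single]; rfl
          calc ∑ p ∈ P, |b p i|
              = ∑ p ∈ P, w p ^ (1/z) * |∑ j, p j * (N.mulVec (Pi.single i 1)) j| := by
                apply Finset.sum_congr rfl; intro p hp
                rw [hxi]
                simp only [hbdef]
                rw [abs_mul, abs_of_nonneg (Real.rpow_nonneg (hw p hp) _)]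
                congr 2
                exact Finset.sum_congr rfl fun j _ => mul_comm _ _
            _ ≤ Real.sqrt d * l2 (M.mulVec (N.mulVec (Pi.single i 1))) := hMup _
            _ = Real.sqrt d := by rw [hMNs i, l2_single, mul_one]
      _ = (d : ℝ) * Real.sqrt d := by
          rw [Finset.sum_const, Finset.card_univ, Fintype.card_fin, nsmul_eq_mul]
  -- now bound ∑ (a p)^z
  rcases Finset.eq_empty_or_nonempty P with hPe | hPne
  · rw [hPe, Finset.sum_empty]
    positivity
  have hn : 0 < n := hcard ▸ Finset.card_pos.mpr hPne
  have hnr : (0:ℝ) < n := by exact_mod_cast hn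
  rcases Nat.eq_zero_or_pos d with hd0 | hd
  · have hz' : ∀ p ∈ P, a p ^ z = 0 := by
      intro p hp
      have : a p = 0 := by subst hd0; simp [hadef, l2]
      rw [this, Real.zero_rpow (ne_of_gt hz0)]
    rw [Finset.sum_eq_zero hz']
    positivity
  have hdr : (1:ℝ) ≤ d := by exact_mod_cast hd
  have hdr0 : (0:ℝ) < d := by positivity
  have amean := Real.arith_mean_le_rpow_mean P (fun _ => (n:ℝ)⁻¹) (fun p => a p ^ z)
      (fun _ _ => by positivity)
      (by rw [Finset.sum_const, hcard, nsmul_eq_mul, mul_inv_cancel₀ (ne_of_gt hnr)])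
      (fun p _ => Real.rpow_nonneg (ha0 p) _)
      (p := 1/z) (by rw [le_div_iff₀ hz0, one_mul]; exact hz1.le)
  rw [one_div_one_div] at amean
  have hsimp : ∀ p ∈ P, (n:ℝ)⁻¹ * (a p ^ z) ^ (1/z) = (n:ℝ)⁻¹ * a p := by
    intro p _
    rw [← Real.rpow_mul (ha0 p), mul_one_div_cancel (ne_of_gt hz0), Real.rpow_one]
  rw [Finset.sum_congr rfl hsimp] at amean
  -- amean : ∑ p ∈ P, n⁻¹ * a p ^ z ≤ (∑ p ∈ P, n⁻¹ * a p) ^ z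
  have hC0 : (0:ℝ) ≤ (d:ℝ) * Real.sqrt d := by positivity
  calc ∑ p ∈ P, a p ^ z = (n:ℝ) * ∑ p ∈ P, (n:ℝ)⁻¹ * a p ^ z := by
        rw [← Finset.mul_sum, ← mul_assoc, mul_inv_cancel₀ (ne_of_gt hnr), one_mul]
    _ ≤ (n:ℝ) * ((∑ p ∈ P, (n:ℝ)⁻¹ * a p) ^ z) := by
        exact mul_le_mul_of_nonneg_left amean hnr.le
    _ = (n:ℝ) * (((n:ℝ)⁻¹ * ∑ p ∈ P, a p) ^ z) := by rw [Finset.mul_sum]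
    _ ≤ (n:ℝ) * (((n:ℝ)⁻¹ * ((d:ℝ) * Real.sqrt d)) ^ z) := by
        apply mul_le_mul_of_nonneg_left _ hnr.le
        apply Real.rpow_le_rpow
          (mul_nonneg (inv_nonneg.mpr hnr.le) (Finset.sum_nonneg fun p _ => ha0 p)) _ hz0.le
        exact mul_le_mul_of_nonneg_left hsumA (inv_nonneg.mpr hnr.le)
    _ = (n:ℝ) ^ (1 - z) * ((d:ℝ) * Real.sqrt d) ^ z := by
        rw [Real.mul_rpow (by positivity) hC0, Real.inv_rpow hnr.le, ← Real.rpow_neg hnr.le,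
          show (1:ℝ) - z = 1 + (-z) by ring, Real.rpow_add hnr, Real.rpow_one]
        ring
    _ ≤ (n : ℝ) ^ (1 - z) * (d : ℝ) ^ (z / 2 + 1) := by
        apply mul_le_mul_of_nonneg_left _ (Real.rpow_nonneg hnr.le _)
        have hds : (d:ℝ) * Real.sqrt d = (d:ℝ) ^ ((3:ℝ)/2) := by
          rw [show (3:ℝ)/2 = 1 + 1/2 by norm_num, Real.rpow_add hdr0, Real.rpow_one,
            Real.sqrt_eq_rpow]
        rw [hds, ← Real.rpow_mul hdr0.le]
        exact Real.rpow_le_rpow_of_exponent_le hdr (by linarith)
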